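/- Let E > 0 be a real number and K ≥ 1 a natural number. Define the densities p_E^{(K)} : ℂ^K → ℝ by p_E^{(K)}(x) = π^{−K}·(1+K·E)^{−1}·exp(−Σ_{i=1}^K |x_i|² + E·|Σ_{i=1}^K x_i|²/(1+K·E)) and p_E : ℂ → ℝ by p_E(x) = (π(1+E))^{−1}·exp(−|x|²/(1+E)). Then the Kullback–Leibler divergence (in natural units) satisfies ∫_{ℂ^K} p_E^{(K)}(x) · ln( p_E^{(K)}(x) / Π_{i=1}^K p_E(x_i) ) dx = ln( (1+E)^K / (1+K·E) ), where the integral is the Lebesgue integral over ℝ^{2K} upon identifying ℂ^K with ℝ^{2K}. -/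

import Mathlib

open MeasureTheory Real

lemma cgauss_int {a : ℝ} (ha : 0 < a) :
    ∫ z : ℂ, rexp (-(a * ‖z‖ ^ 2)) = π / a := by
  have h := Complex.integral_rpow_mul_exp_neg_mul_rpow (p := 2) (q := 0) (b := a)
    one_le_two (by norm_num) ha
  simp only [Real.rpow_zero, one_mul] at h
  have h2 : ∀ z : ℂ, ‖z‖ ^ (2:ℝ) = ‖z‖ ^ 2 := by
    intro z
    rw [show (2:ℝ) = ((2:ℕ):ℝ) by norm_num, Real.rpow_natCast]
  simp_rw [h2, neg_mul] at h
  rw [h]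
  rw [show (-(0+2):ℝ)/2 = -1 by norm_num, Real.rpow_neg_one, show ((0:ℝ)+2)/2 = 1 by norm_num,
    Real.Gamma_one]
  field_simp

lemma cgauss_mom {a : ℝ} (ha : 0 < a) :
    ∫ z : ℂ, ‖z‖ ^ 2 * rexp (-(a * ‖z‖ ^ 2)) = π / a ^ 2 := by
  have h := Complex.integral_rpow_mul_exp_neg_mul_rpow (p := 2) (q := 2) (b := a)
    one_le_two (by norm_num) ha
  have h2 : ∀ z : ℂ, ‖z‖ ^ (2:ℝ) = ‖z‖ ^ 2 := by
    intro z
    rw [show (2:ℝ) = ((2:ℕ):ℝ) by norm_num, Real.rpow_natCast]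
  simp_rw [h2, neg_mul] at h
  rw [h]
  rw [show (-(2+2):ℝ)/2 = -2 by norm_num, show ((2:ℝ)+2)/2 = 2 by norm_num,
    Real.Gamma_two, show (-2:ℝ) = ((-2:ℤ):ℝ) by norm_num, Real.rpow_intCast]
  norm_num
  rw [div_eq_mul_inv]
  try rfl

lemma real_sq_gauss_integrable {a : ℝ} (ha : 0 < a) :
    Integrable fun x : ℝ => x ^ 2 * rexp (-a * x ^ 2) := by
  have := integrable_rpow_mul_exp_neg_mul_sq ha (s := 2) (by norm_num)
  simpa [show ((2:ℕ):ℝ) = (2:ℝ) by norm_num, Real.rpow_natCast] using this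

lemma cgauss_integrable {a : ℝ} (ha : 0 < a) :
    Integrable fun z : ℂ => rexp (-(a * ‖z‖ ^ 2)) := by
  rw [← MeasurePreserving.integrable_comp_emb Complex.volume_preserving_equiv_real_prod.symm
    (MeasurableEquiv.measurableEmbedding _)]
  have : (fun z : ℂ => rexp (-(a * ‖z‖ ^ 2))) ∘ Complex.measurableEquivRealProd.symm
      = fun p : ℝ × ℝ => rexp (-a * p.1 ^ 2) * rexp (-a * p.2 ^ 2) := by
    ext p
    simp only [Function.comp_apply, Complex.measurableEquivRealProd_symm_apply]
    rw [← Real.exp_add, Complex.sq_norm, Complex.normSq_apply]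
    norm_num
    ring_nf
  rw [this]
  exact (integrable_exp_neg_mul_sq ha).mul_prod (integrable_exp_neg_mul_sq ha)

lemma cgauss_mom_integrable {a : ℝ} (ha : 0 < a) :
    Integrable fun z : ℂ => ‖z‖ ^ 2 * rexp (-(a * ‖z‖ ^ 2)) := by
  rw [← MeasurePreserving.integrable_comp_emb Complex.volume_preserving_equiv_real_prod.symm
    (MeasurableEquiv.measurableEmbedding _)]
  have : (fun z : ℂ => ‖z‖ ^ 2 * rexp (-(a * ‖z‖ ^ 2))) ∘
        Complex.measurableEquivRealProd.symm
      = fun p : ℝ × ℝ => (p.1 ^ 2 * rexp (-a * p.1 ^ 2)) * rexp (-a * p.2 ^ 2)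
          + rexp (-a * p.1 ^ 2) * (p.2 ^ 2 * rexp (-a * p.2 ^ 2)) := by
    ext p
    simp only [Function.comp_apply, Complex.measurableEquivRealProd_symm_apply]
    rw [Complex.sq_norm, Complex.normSq_apply]
    rw [show -(a * (p.1 * p.1 + p.2 * p.2)) = -a * p.1 ^ 2 + -a * p.2 ^ 2 by ring,
      Real.exp_add]
    ring
  rw [this]
  exact ((real_sq_gauss_integrable ha).mul_prod (integrable_exp_neg_mul_sq ha)).add
    ((integrable_exp_neg_mul_sq ha).mul_prod (real_sq_gauss_integrable ha))

section transfer
variable {K : ℕ}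

lemma transfer_aux (hK : 0 < K) (G : ℝ → ℝ → ℝ) :
    (∫ x : Fin K → ℂ, G (∑ i, ((x i).re ^ 2 + (x i).im ^ 2))
        ((∑ i, (x i).re) ^ 2 + (∑ i, (x i).im) ^ 2))
    = ∫ x : Fin K → ℂ, G (∑ i, ((x i).re ^ 2 + (x i).im ^ 2))
        ((K : ℝ) * ((x ⟨0, hK⟩).re ^ 2 + (x ⟨0, hK⟩).im ^ 2)) := by
  classical
  set i0 : Fin K := ⟨0, hK⟩
  have hK0 : (0:ℝ) < (K:ℝ) := by exact_mod_cast hK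
  set e₀ : EuclideanSpace ℝ (Fin K) := EuclideanSpace.single i0 1 with he₀
  set v : EuclideanSpace ℝ (Fin K) :=
    (WithLp.equiv 2 (Fin K → ℝ)).symm (fun _ => (Real.sqrt K)⁻¹) with hv
  have hsK : Real.sqrt K ≠ 0 := by positivity
  have hnv : ‖v‖ = 1 := by
    rw [EuclideanSpace.norm_eq]
    have : ∀ i : Fin K, ‖((WithLp.equiv 2 (Fin K → ℝ)).symm (fun _ => (Real.sqrt K)⁻¹)) i‖ ^ 2
        = (Real.sqrt K)⁻¹ ^ 2 := by intro i; rw [WithLp.equiv_symm_apply]; simp [abs_of_pos]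
    rw [hv]
    simp only [this, Finset.sum_const, Finset.card_univ, Fintype.card_fin, nsmul_eq_mul]
    rw [inv_pow, Real.sq_sqrt hK0.le, mul_inv_cancel₀ hK0.ne', Real.sqrt_one]
  have hne : ‖v‖ = ‖e₀‖ := by
    rw [hnv, he₀, EuclideanSpace.norm_single, norm_one]
  set U : EuclideanSpace ℝ (Fin K) ≃ₗᵢ[ℝ] EuclideanSpace ℝ (Fin K) :=
    Submodule.reflection (ℝ ∙ (v - e₀))ᗮ with hU
  have hUv : U v = e₀ := Submodule.reflection_sub hne
  have hUe : U e₀ = v := by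
    rw [← hUv, hU, Submodule.reflection_reflection]
  -- key pointwise identities
  have hsum : ∀ a : Fin K → ℝ,
      ∑ i, U ((WithLp.equiv 2 (Fin K → ℝ)).symm a) i = Real.sqrt K * a i0 := by
    intro a
    set A := (WithLp.equiv 2 (Fin K → ℝ)).symm a with hA
    have h1 : (inner ℝ v (U A) : ℝ) = (Real.sqrt K)⁻¹ * ∑ i, U A i := by
      rw [PiLp.inner_apply, Finset.mul_sum]
      refine Finset.sum_congr rfl fun i _ => ?_
      rw [hv, WithLp.equiv_symm_apply]
      simp [RCLike.inner_apply, mul_comm]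
    have h2 : (inner ℝ v (U A) : ℝ) = a i0 := by
      rw [← hUe, LinearIsometryEquiv.inner_map_map, he₀, EuclideanSpace.inner_single_left]
      simp [hA, WithLp.equiv_symm_apply]
    rw [h1] at h2
    field_simp at h2
    linarith [h2]
  have hsq : ∀ a : Fin K → ℝ,
      ∑ i, (U ((WithLp.equiv 2 (Fin K → ℝ)).symm a) i) ^ 2 = ∑ i, a i ^ 2 := by
    intro a
    set A := (WithLp.equiv 2 (Fin K → ℝ)).symm a with hA
    have h1 : (inner ℝ (U A) (U A) : ℝ) = ∑ i, (U A i) ^ 2 := by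
      rw [PiLp.inner_apply]
      exact Finset.sum_congr rfl fun i _ => by simp [RCLike.inner_apply, pow_two]
    have h2 : (inner ℝ A A : ℝ) = ∑ i, a i ^ 2 := by
      rw [PiLp.inner_apply]
      exact Finset.sum_congr rfl fun i _ => by
        simp [RCLike.inner_apply, hA, WithLp.equiv_symm_apply, pow_two]
    rw [← h1, LinearIsometryEquiv.inner_map_map, h2]
  -- measurable equivalences
  set m : EuclideanSpace ℝ (Fin K) ≃ᵐ (Fin K → ℝ) := (MeasurableEquiv.toLp 2 (Fin K → ℝ)).symm
  set Um : (Fin K → ℝ) ≃ᵐ (Fin K → ℝ) :=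
    (m.symm.trans U.toHomeomorph.toMeasurableEquiv).trans m with hUmdef
  have hUm : MeasurePreserving Um := by
    have h : MeasurePreserving (⇑m ∘ ⇑U ∘ ⇑m.symm) volume volume :=
      (EuclideanSpace.volume_preserving_symm_measurableEquiv_toLp (Fin K)).comp
        ((U.measurePreserving).comp
          (EuclideanSpace.volume_preserving_symm_measurableEquiv_toLp (Fin K)).symm)
    exact h
  set pe : (Fin K → ℂ) ≃ᵐ (Fin K → ℝ × ℝ) :=
    MeasurableEquiv.piCongrRight (fun _ : Fin K => Complex.measurableEquivRealProd) with hpedef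
  have hpe : MeasurePreserving pe := by
    have h : MeasurePreserving (fun (x : Fin K → ℂ) (i : Fin K) =>
        Complex.measurableEquivRealProd (x i))
        (Measure.pi fun _ => volume) (Measure.pi fun _ => volume) :=
      measurePreserving_pi _ _ (fun _ => Complex.volume_preserving_equiv_real_prod)
    exact h
  set ae := MeasurableEquiv.arrowProdEquivProdArrow ℝ ℝ (Fin K) with haedef
  have hae : MeasurePreserving ae :=
    volume_measurePreserving_arrowProdEquivProdArrow ℝ ℝ (Fin K)
  set pm : ((Fin K → ℝ) × (Fin K → ℝ)) ≃ᵐ ((Fin K → ℝ) × (Fin K → ℝ)) :=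
    Um.prodCongr Um with hpmdef
  have hpm : MeasurePreserving pm := by
    have h : MeasurePreserving (Prod.map ⇑Um ⇑Um)
        ((volume : Measure (Fin K → ℝ)).prod volume)
        ((volume : Measure (Fin K → ℝ)).prod volume) := hUm.prod hUm
    exact h
  set Φ : (Fin K → ℂ) ≃ᵐ (Fin K → ℂ) :=
    ((pe.trans ae).trans pm).trans (ae.symm.trans pe.symm) with hPhidef
  have hΦ : MeasurePreserving Φ := by
    have h : MeasurePreserving (⇑pe.symm ∘ (⇑ae.symm ∘ (⇑pm ∘ (⇑ae ∘ ⇑pe)))) volume volume :=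
      (hpe.symm _).comp ((hae.symm _).comp (hpm.comp (hae.comp hpe)))
    exact h
  have hsum' : ∀ a : Fin K → ℝ, ∑ i, Um a i = Real.sqrt K * a i0 := hsum
  have hsq' : ∀ a : Fin K → ℝ, ∑ i, (Um a i) ^ 2 = ∑ i, a i ^ 2 := hsq
  have key : (fun x : Fin K → ℂ => G (∑ i, ((x i).re ^ 2 + (x i).im ^ 2))
        ((∑ i, (x i).re) ^ 2 + (∑ i, (x i).im) ^ 2)) ∘ ⇑Φ
      = fun x : Fin K → ℂ => G (∑ i, ((x i).re ^ 2 + (x i).im ^ 2))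
        ((K : ℝ) * ((x i0).re ^ 2 + (x i0).im ^ 2)) := by
    funext x
    have hre : ∀ i, (Φ x i).re = Um (fun j => (x j).re) i := fun i => rfl
    have him : ∀ i, (Φ x i).im = Um (fun j => (x j).im) i := fun i => rfl
    simp only [Function.comp_apply, hre, him]
    rw [Finset.sum_add_distrib, hsq', hsq', hsum', hsum', ← Finset.sum_add_distrib,
      mul_pow, mul_pow, Real.sq_sqrt hK0.le]
    congr 1
    ring
  calc (∫ x : Fin K → ℂ, G (∑ i, ((x i).re ^ 2 + (x i).im ^ 2))
        ((∑ i, (x i).re) ^ 2 + (∑ i, (x i).im) ^ 2))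
      = ∫ x : Fin K → ℂ, ((fun x : Fin K → ℂ => G (∑ i, ((x i).re ^ 2 + (x i).im ^ 2))
          ((∑ i, (x i).re) ^ 2 + (∑ i, (x i).im) ^ 2)) ∘ ⇑Φ) x :=
        (hΦ.integral_comp' _).symm
    _ = _ := by rw [key]
end transfer

lemma log_part {E : ℝ} (hE : 0 < E) (K : ℕ) (s t : ℝ) :
    Real.log ((((Real.pi : ℝ) ^ K * (1 + K * E))⁻¹ * rexp (-s + E * t / (1 + K * E))) /
        ((Real.pi * (1 + E))⁻¹ ^ K * rexp (-s / (1 + E))))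
    = Real.log ((1 + E) ^ K / (1 + K * E)) + E * t / (1 + K * E) - E / (1 + E) * s := by
  have hπ := Real.pi_pos
  have h1E : (0:ℝ) < 1 + E := by linarith
  have h1KE : (0:ℝ) < 1 + K * E := by positivity
  rw [Real.log_div (by positivity) (by positivity),
    Real.log_mul (by positivity) (Real.exp_pos _).ne',
    Real.log_mul (by positivity) (Real.exp_pos _).ne',
    Real.log_exp, Real.log_exp, Real.log_inv,
    Real.log_mul (by positivity) h1KE.ne', Real.log_pow,
    Real.log_pow, Real.log_inv, Real.log_mul hπ.ne' h1E.ne',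
    Real.log_div (by positivity) h1KE.ne', Real.log_pow]
  have : -s - -s / (1 + E) = -(E / (1 + E) * s) := by field_simp; ring
  linarith [this]

/-- The Kullback–Leibler divergence (in natural units) between the joint heterodyne
outcome density `p_E^{(K)}` of `K` detectors and the product of its marginals equals
`ln((1+E)^K / (1+KE))`. -/
theorem heterodyne_relative_entropy (E : ℝ) (hE : 0 < E) (K : ℕ) (hK : 1 ≤ K) :
    ∫ x : Fin K → ℂ,
        ((Real.pi ^ K * (1 + (K : ℝ) * E))⁻¹ *
            Real.exp (-∑ i, ‖x i‖ ^ 2 +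
              E * ‖∑ i, x i‖ ^ 2 / (1 + (K : ℝ) * E))) *
          Real.log
            (((Real.pi ^ K * (1 + (K : ℝ) * E))⁻¹ *
                Real.exp (-∑ i, ‖x i‖ ^ 2 +
                  E * ‖∑ i, x i‖ ^ 2 / (1 + (K : ℝ) * E))) /
              ∏ i, (Real.pi * (1 + E))⁻¹ * Real.exp (-‖x i‖ ^ 2 / (1 + E))) =
      Real.log ((1 + E) ^ K / (1 + (K : ℝ) * E)) := by
  have hK0 : 0 < K := hK
  have hπ := Real.pi_pos
  have h1E : (0:ℝ) < 1 + E := by linarith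
  have h1KE : (0:ℝ) < 1 + (K:ℝ) * E := by positivity
  set i0 : Fin K := ⟨0, hK0⟩ with hi0
  set L : ℝ := Real.log ((1 + E) ^ K / (1 + (K:ℝ) * E)) with hL
  set CC : ℝ := ((Real.pi:ℝ) ^ K * (1 + (K:ℝ) * E))⁻¹ with hCC
  set G : ℝ → ℝ → ℝ := fun s t =>
    CC * rexp (-s + E * t / (1 + (K:ℝ) * E)) *
      (L + E * t / (1 + (K:ℝ) * E) - E / (1 + E) * s) with hG
  have habs : ∀ z : ℂ, ‖z‖ ^ 2 = z.re ^ 2 + z.im ^ 2 := fun z => by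
    rw [Complex.sq_norm, Complex.normSq_apply]; ring
  -- Step 1 : rewrite the integrand pointwise
  have step1 : (fun x : Fin K → ℂ =>
        ((Real.pi ^ K * (1 + (K : ℝ) * E))⁻¹ *
            Real.exp (-∑ i, ‖x i‖ ^ 2 +
              E * ‖∑ i, x i‖ ^ 2 / (1 + (K : ℝ) * E))) *
          Real.log
            (((Real.pi ^ K * (1 + (K : ℝ) * E))⁻¹ *
                Real.exp (-∑ i, ‖x i‖ ^ 2 +
                  E * ‖∑ i, x i‖ ^ 2 / (1 + (K : ℝ) * E))) /
              ∏ i, (Real.pi * (1 + E))⁻¹ * Real.exp (-‖x i‖ ^ 2 / (1 + E))))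
      = fun x : Fin K → ℂ => G (∑ i, ((x i).re ^ 2 + (x i).im ^ 2))
          ((∑ i, (x i).re) ^ 2 + (∑ i, (x i).im) ^ 2) := by
    funext x
    have hprod : (∏ i, (Real.pi * (1 + E))⁻¹ * Real.exp (-‖x i‖ ^ 2 / (1 + E)))
        = (Real.pi * (1 + E))⁻¹ ^ K * rexp (-(∑ i, ‖x i‖ ^ 2) / (1 + E)) := by
      rw [Finset.prod_mul_distrib, Finset.prod_const, Finset.card_univ, Fintype.card_fin,
        ← Real.exp_sum]
      congr 1
      rw [← Finset.sum_div, ← Finset.sum_neg_distrib]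
    rw [hprod, log_part hE K (∑ i, ‖x i‖ ^ 2) (‖∑ i, x i‖ ^ 2)]
    have h1 : ∑ i, ‖x i‖ ^ 2 = ∑ i, ((x i).re ^ 2 + (x i).im ^ 2) :=
      Finset.sum_congr rfl fun i _ => habs _
    have h2 : ‖∑ i, x i‖ ^ 2 = (∑ i, (x i).re) ^ 2 + (∑ i, (x i).im) ^ 2 := by
      rw [habs, Complex.re_sum, Complex.im_sum]
    rw [h1, h2, hG]
  rw [step1, transfer_aux hK0 G]
  -- Step 2 : back to modulus form
  have step3 : (fun x : Fin K → ℂ => G (∑ i, ((x i).re ^ 2 + (x i).im ^ 2))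
        ((K : ℝ) * ((x i0).re ^ 2 + (x i0).im ^ 2)))
      = fun x : Fin K → ℂ => G (∑ i, ‖x i‖ ^ 2)
          ((K : ℝ) * ‖x i0‖ ^ 2) := by
    funext x
    rw [show ∑ i, ((x i).re ^ 2 + (x i).im ^ 2) = ∑ i, ‖x i‖ ^ 2 from
      (Finset.sum_congr rfl fun i _ => (habs _).symm), ← habs]
  rw [step3]
  -- Step 3 : evaluate the factorized integral
  set aa : Fin K → ℝ := fun i => if i = i0 then (1 + (K:ℝ) * E)⁻¹ else 1 with haadef
  have haa : ∀ i, 0 < aa i := by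
    intro i; simp only [haadef]; split
    · positivity
    · norm_num
  set P : (Fin K → ℂ) → ℝ := fun x => ∏ i, rexp (-(aa i * ‖x i‖ ^ 2)) with hP
  set Q : Fin K → (Fin K → ℂ) → ℝ := fun j x =>
    ∏ i, ((if i = j then ‖x i‖ ^ 2 else 1) *
      rexp (-(aa i * ‖x i‖ ^ 2))) with hQ
  have hQP : ∀ j x, Q j x = ‖x j‖ ^ 2 * P x := by
    intro j x
    simp only [hQ]
    rw [Finset.prod_mul_distrib, Finset.prod_ite_eq' Finset.univ j
      (fun i => ‖x i‖ ^ 2)]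
    simp [hP]
  have hPexp : ∀ x : Fin K → ℂ,
      rexp (-(∑ i, ‖x i‖ ^ 2) + E * ((K:ℝ) * ‖x i0‖ ^ 2) / (1 + (K:ℝ) * E))
        = P x := by
    intro x
    simp only [hP]
    rw [← Real.exp_sum]
    congr 1
    have key : ∀ i, -(aa i * ‖x i‖ ^ 2)
        = -‖x i‖ ^ 2 + (if i = i0 then ((K:ℝ) * E / (1 + (K:ℝ) * E)) *
            ‖x i‖ ^ 2 else 0) := by
      intro i
      simp only [haadef]
      by_cases h : i = i0
      · simp only [h, if_true]; field_simp; ring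
      · simp only [h, if_false]; ring
    rw [Finset.sum_congr rfl fun i _ => key i, Finset.sum_add_distrib,
      Finset.sum_ite_eq' Finset.univ i0
        (fun i => ((K:ℝ) * E / (1 + (K:ℝ) * E)) * ‖x i‖ ^ 2)]
    simp only [Finset.mem_univ, if_true, ← Finset.sum_neg_distrib]
    field_simp
  have main_pt : (fun x : Fin K → ℂ => G (∑ i, ‖x i‖ ^ 2)
        ((K : ℝ) * ‖x i0‖ ^ 2))
      = fun x => (L * CC) * P x + (CC * (E * (K:ℝ) / (1 + (K:ℝ) * E))) * Q i0 x
          - (CC * (E / (1 + E))) * (∑ j, Q j x) := by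
    funext x
    rw [hG]
    dsimp only
    rw [hPexp x]
    have hsQ : ∑ j, Q j x = (∑ j, ‖x j‖ ^ 2) * P x := by
      rw [Finset.sum_congr rfl fun j _ => hQP j x, ← Finset.sum_mul]
    rw [hsQ, hQP i0 x]
    ring
  rw [main_pt]
  -- integrability
  have hIP : Integrable P := by
    apply Integrable.fintype_prod (f := fun i (z : ℂ) => rexp (-(aa i * ‖z‖ ^ 2)))
    intro i; exact cgauss_integrable (haa i)
  have hIQ : ∀ j, Integrable (Q j) := by
    intro j
    apply Integrable.fintype_prod (f := fun i (z : ℂ) =>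
      (if i = j then ‖z‖ ^ 2 else 1) * rexp (-(aa i * ‖z‖ ^ 2)))
    intro i
    by_cases h : i = j
    · simpa [h] using cgauss_mom_integrable (haa i)
    · simpa [h] using cgauss_integrable (haa i)
  have hintP : ∫ x : Fin K → ℂ, P x = ∏ i, (π / aa i) := by
    rw [hP]
    beta_reduce
    rw [integral_fintype_prod_volume_eq_prod (ι := Fin K)
      (f := fun i (z : ℂ) => rexp (-(aa i * ‖z‖ ^ 2)))]
    exact Finset.prod_congr rfl fun i _ => cgauss_int (haa i)
  have hintQ : ∀ j, ∫ x : Fin K → ℂ, Q j x = (∏ i, (π / aa i)) * (aa j)⁻¹ := by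
    intro j
    rw [hQ]
    beta_reduce
    rw [integral_fintype_prod_volume_eq_prod (ι := Fin K)
      (f := fun i (z : ℂ) => (if i = j then ‖z‖ ^ 2 else 1) *
        rexp (-(aa i * ‖z‖ ^ 2)))]
    have hfac : ∀ i, (∫ z : ℂ, (if i = j then ‖z‖ ^ 2 else 1) *
        rexp (-(aa i * ‖z‖ ^ 2)))
        = (π / aa i) * (if i = j then (aa i)⁻¹ else 1) := by
      intro i
      by_cases h : i = j
      · simp only [h, if_true]
        rw [cgauss_mom (haa j), pow_two, ← div_div, div_eq_mul_inv (π / aa j)]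
      · simp only [h, if_false, one_mul, mul_one]
        exact cgauss_int (haa i)
    rw [Finset.prod_congr rfl fun i _ => hfac i, Finset.prod_mul_distrib,
      Finset.prod_ite_eq' Finset.univ j (fun i => (aa i)⁻¹)]
    simp
  have hprodaa : ∏ i, aa i = (1 + (K:ℝ) * E)⁻¹ := by
    simp only [haadef]
    rw [Finset.prod_ite_eq' Finset.univ i0 (fun _ => (1 + (K:ℝ) * E)⁻¹)]
    simp
  have hprodA : ∏ i, (π / aa i) = π ^ K * (1 + (K:ℝ) * E) := by
    simp_rw [div_eq_mul_inv]
    rw [Finset.prod_mul_distrib, Finset.prod_const, Finset.card_univ, Fintype.card_fin,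
      Finset.prod_inv_distrib, hprodaa, inv_inv]
  have hsumaa : ∑ j, (aa j)⁻¹ = (K:ℝ) + (K:ℝ) * E := by
    have key : ∀ j, (aa j)⁻¹ = 1 + (if j = i0 then (K:ℝ) * E else 0) := by
      intro j
      simp only [haadef]
      by_cases h : j = i0
      · simp [h]
      · simp [h]
    rw [Finset.sum_congr rfl fun j _ => key j, Finset.sum_add_distrib,
      Finset.sum_ite_eq' Finset.univ i0 (fun _ => (K:ℝ) * E)]
    simp
  have I1a : Integrable (fun x : Fin K → ℂ => L * CC * P x) := hIP.const_mul _
  have I1b : Integrable (fun x : Fin K → ℂ =>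
      CC * (E * (K:ℝ) / (1 + (K:ℝ) * E)) * Q i0 x) := (hIQ i0).const_mul _
  have I1 : Integrable (fun x : Fin K → ℂ => L * CC * P x
      + CC * (E * (K:ℝ) / (1 + (K:ℝ) * E)) * Q i0 x) := I1a.add I1b
  have I2 : Integrable (fun x : Fin K → ℂ => CC * (E / (1 + E)) * ∑ j, Q j x) :=
    (integrable_finset_sum _ fun j _ => hIQ j).const_mul _
  rw [integral_sub I1 I2, integral_add I1a I1b,
    integral_const_mul, integral_const_mul, integral_const_mul,
    integral_finset_sum _ (fun j _ => hIQ j),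
    Finset.sum_congr rfl (fun j _ => hintQ j), ← Finset.mul_sum,
    hintP, hintQ i0, hsumaa, hprodA]
  have haai0 : (aa i0)⁻¹ = 1 + (K:ℝ) * E := by simp [haadef]
  rw [haai0, hCC]
  field_simp
  ring
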